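/- Let α = (α_n)_{n≥0} be a bounded sequence of positive real numbers, let λ ∈ [0,1), and for each m ≥ 0 let W^{(m)} be the unilateral weighted shift on ℓ²(ℤ≥0) with weight sequence α^{(m)}_n = Σ_{i=0}^{m} C(m,i) λ^{m-i} (1-λ)^i α_{n+i} (this is the m-th iterated λ-mean transform M^{(m)}_λ(W_α) of W_α). Then: (i) if α is monotone decreasing, W^{(m)} converges in operator norm, as m → ∞, to (inf_{n≥0} α_n) times the unweighted unilateral shift; (ii) if α is monotone increasing, W^{(m)} converges in operator norm to (sup_{n≥0} α_n) times the unweighted unilateral shift. -/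

import Mathlib

open ContinuousLinearMap Filter
open scoped ENNReal NNReal

noncomputable def wgt (l : ℝ) (m i : ℕ) : ℝ := (m.choose i : ℝ) * l ^ (m - i) * (1 - l) ^ i

lemma wgt_nonneg {l : ℝ} (hl : l ∈ Set.Ico (0:ℝ) 1) (m i : ℕ) : 0 ≤ wgt l m i := by
  have h1 : (0:ℝ) ≤ 1 - l := by linarith [hl.2]
  exact mul_nonneg (mul_nonneg (Nat.cast_nonneg _) (pow_nonneg hl.1 _)) (pow_nonneg h1 _)

lemma wgt_sum (l : ℝ) (m : ℕ) : ∑ i ∈ Finset.range (m+1), wgt l m i = 1 := by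
  have h := add_pow (1 - l) l m
  have h1 : ((1 - l) + l) ^ m = 1 := by norm_num
  rw [h1] at h
  calc ∑ i ∈ Finset.range (m+1), wgt l m i
      = ∑ i ∈ Finset.range (m+1), (1 - l) ^ i * l ^ (m - i) * (m.choose i : ℝ) := by
        apply Finset.sum_congr rfl
        intro i _
        simp only [wgt]; ring
    _ = 1 := h.symm

lemma wgt_term_tendsto {l : ℝ} (hl : l ∈ Set.Ico (0:ℝ) 1) (i : ℕ) :
    Tendsto (fun m => wgt l m i) atTop (nhds 0) := by
  rcases eq_or_lt_of_le hl.1 with h0 | h0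
  · apply tendsto_const_nhds.congr'
    filter_upwards [eventually_gt_atTop i] with m hm
    have hne : m - i ≠ 0 := Nat.sub_ne_zero_of_lt hm
    simp [wgt, ← h0, zero_pow hne]
  · have key : Tendsto (fun m : ℕ => ((m:ℝ) ^ i * l ^ m) * (l ^ i)⁻¹) atTop (nhds 0) := by
      simpa using (tendsto_pow_const_mul_const_pow_of_lt_one i hl.1 hl.2).mul_const (l ^ i)⁻¹
    apply squeeze_zero (fun m => wgt_nonneg hl m i) _ key
    intro m
    by_cases him : i ≤ m
    · have hch : (m.choose i : ℝ) ≤ (m:ℝ) ^ i := by exact_mod_cast Nat.choose_le_pow m i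
      have hps : l ^ (m - i) = l ^ m * (l ^ i)⁻¹ := by
        rw [pow_sub₀ l (ne_of_gt h0) him]
        try ring
      have h1l : (1 - l) ^ i ≤ 1 := pow_le_one₀ (by linarith [hl.2]) (by linarith [hl.2])
      calc wgt l m i = (m.choose i : ℝ) * (l ^ m * (l ^ i)⁻¹) * (1-l)^i := by
            rw [wgt, hps]
        _ ≤ (m:ℝ)^i * (l ^ m * (l ^ i)⁻¹) * 1 := by
            have hnn1 : (0:ℝ) ≤ (1 - l) ^ i := pow_nonneg (by linarith [hl.2]) i
            have hnn2 : (0:ℝ) ≤ (m:ℝ)^i * (l ^ m * (l ^ i)⁻¹) :=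
              mul_nonneg (by positivity)
                (mul_nonneg (pow_nonneg h0.le m) (inv_nonneg.2 (pow_nonneg h0.le i)))
            exact mul_le_mul (mul_le_mul_of_nonneg_right hch
              (mul_nonneg (pow_nonneg h0.le m) (inv_nonneg.2 (pow_nonneg h0.le i))))
              h1l hnn1 hnn2
        _ = ((m:ℝ) ^ i * l ^ m) * (l ^ i)⁻¹ := by ring
    · have : m.choose i = 0 := Nat.choose_eq_zero_of_lt (by omega)
      simp only [wgt, this, Nat.cast_zero, zero_mul]
      exact mul_nonneg (mul_nonneg (by positivity) (pow_nonneg h0.le m))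
        (inv_nonneg.2 (pow_nonneg h0.le i))

lemma tail_tendsto {l : ℝ} (hl : l ∈ Set.Ico (0:ℝ) 1) (N : ℕ) :
    Tendsto (fun m => ∑ i ∈ Finset.range N, wgt l m i) atTop (nhds 0) := by
  have h := tendsto_finset_sum (Finset.range N)
    (fun i (_ : i ∈ Finset.range N) => wgt_term_tendsto hl i)
  simpa using h

lemma key_tendsto {l : ℝ} (hl : l ∈ Set.Ico (0:ℝ) 1) (γ : ℕ → ℝ)
    (hnn : ∀ n, 0 ≤ γ n) (hmono : Antitone γ) (hsmall : ∀ ε > (0:ℝ), ∃ N, γ N < ε) :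
    Tendsto (fun m => ∑ i ∈ Finset.range (m+1), wgt l m i * γ i) atTop (nhds 0) := by
  rw [Metric.tendsto_atTop]
  intro ε hε
  obtain ⟨N, hN⟩ := hsmall (ε/2) (by positivity)
  have h2 : Tendsto (fun m => (∑ i ∈ Finset.range N, wgt l m i) * γ 0) atTop (nhds 0) := by
    simpa using (tail_tendsto hl N).mul_const (γ 0)
  rw [Metric.tendsto_atTop] at h2
  obtain ⟨M, hM⟩ := h2 (ε/2) (by positivity)
  refine ⟨max M N, fun m hm => ?_⟩
  have hmM : M ≤ m := le_trans (le_max_left _ _) hm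
  have hmN : N ≤ m := le_trans (le_max_right _ _) hm
  have hfnn : 0 ≤ ∑ i ∈ Finset.range (m+1), wgt l m i * γ i :=
    Finset.sum_nonneg fun i _ => mul_nonneg (wgt_nonneg hl m i) (hnn i)
  rw [Real.dist_eq, sub_zero, abs_of_nonneg hfnn]
  have hsplit : ∑ i ∈ Finset.range (m+1), wgt l m i * γ i =
      (∑ i ∈ Finset.range N, wgt l m i * γ i) +
      ∑ i ∈ Finset.Ico N (m+1), wgt l m i * γ i := by
    rw [Finset.range_eq_Ico, Finset.range_eq_Ico]
    exact (Finset.sum_Ico_consecutive (fun i => wgt l m i * γ i) (k := m+1) (Nat.zero_le N) (by omega)).symm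
  have hb1 : ∑ i ∈ Finset.range N, wgt l m i * γ i ≤
      (∑ i ∈ Finset.range N, wgt l m i) * γ 0 := by
    rw [Finset.sum_mul]
    apply Finset.sum_le_sum
    intro i _
    exact mul_le_mul_of_nonneg_left (hmono (Nat.zero_le i)) (wgt_nonneg hl m i)
  have hb2 : ∑ i ∈ Finset.Ico N (m+1), wgt l m i * γ i ≤ ε/2 := by
    calc ∑ i ∈ Finset.Ico N (m+1), wgt l m i * γ i
        ≤ ∑ i ∈ Finset.Ico N (m+1), wgt l m i * (ε/2) := by
          apply Finset.sum_le_sum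
          intro i hi
          have hNi : N ≤ i := (Finset.mem_Ico.1 hi).1
          exact mul_le_mul_of_nonneg_left (le_of_lt (lt_of_le_of_lt (hmono hNi) hN))
            (wgt_nonneg hl m i)
      _ = (∑ i ∈ Finset.Ico N (m+1), wgt l m i) * (ε/2) := (Finset.sum_mul _ _ _).symm
      _ ≤ 1 * (ε/2) := by
          apply mul_le_mul_of_nonneg_right _ (by positivity)
          rw [← wgt_sum l m, Finset.range_eq_Ico]
          apply Finset.sum_le_sum_of_subset_of_nonneg
          · exact Finset.Ico_subset_Ico (Nat.zero_le N) le_rfl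
          · intro i _ _; exact wgt_nonneg hl m i
      _ = ε/2 := one_mul _
  have htl : (∑ i ∈ Finset.range N, wgt l m i) * γ 0 < ε/2 := by
    have := hM m hmM
    rw [Real.dist_eq, sub_zero] at this
    exact lt_of_le_of_lt (le_abs_self _) this
  linarith [hsplit, hb1, hb2, htl]

lemma lp_single_zero (k : ℕ) : lp.single (E := fun _ : ℕ => ℂ) 2 k (0:ℂ) = 0 := by
  have h : (0:ℂ) = (0:ℂ) • (1:ℂ) := by simp
  rw [h, lp.single_smul, zero_smul]

lemma op_norm_le (T : lp (fun _ : ℕ => ℂ) 2 →L[ℂ] lp (fun _ : ℕ => ℂ) 2)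
    (c : ℕ → ℝ) (K : ℝ) (hK : 0 ≤ K) (hc : ∀ n, |c n| ≤ K)
    (hT : ∀ n, T (lp.single 2 n (1:ℂ)) = ((c n : ℝ) : ℂ) • lp.single 2 (n+1) (1:ℂ)) :
    ‖T‖ ≤ K := by
  refine T.opNorm_le_bound hK fun x => ?_
  have h2top : (2:ℝ≥0∞) ≠ ⊤ := by norm_num
  have hr : (0:ℝ) < (2:ℝ≥0∞).toReal := by norm_num
  set t := (2:ℝ≥0∞).toReal with ht
  set y : ∀ _ : ℕ, ℂ := fun k => Nat.casesOn k 0 (fun n => ((c n : ℝ):ℂ) * x n) with hy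
  have hy0 : y 0 = 0 := rfl
  have hys : ∀ n, y (n+1) = ((c n:ℝ):ℂ) * x n := fun n => rfl
  have hx2 : Summable (fun n => ‖x n‖ ^ t) := (lp.memℓp x).summable hr
  have hbd : ∀ n, ‖y (n+1)‖ ^ t ≤ K ^ t * ‖x n‖ ^ t := by
    intro n
    have h1 : ‖y (n+1)‖ ≤ K * ‖x n‖ := by
      rw [hys, norm_mul, Complex.norm_real]
      exact mul_le_mul_of_nonneg_right (by simpa [Real.norm_eq_abs] using hc n) (norm_nonneg _)
    calc ‖y (n+1)‖ ^ t ≤ (K * ‖x n‖) ^ t :=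
          Real.rpow_le_rpow (norm_nonneg _) h1 (le_of_lt hr)
      _ = K ^ t * ‖x n‖ ^ t := Real.mul_rpow hK (norm_nonneg _)
  have hsum1 : Summable (fun n => ‖y (n+1)‖ ^ t) :=
    Summable.of_nonneg_of_le (fun n => Real.rpow_nonneg (norm_nonneg _) _) hbd
      (hx2.mul_left _)
  have hrange : ∀ k : ℕ, k ∉ Set.range Nat.succ → ‖y k‖ ^ t = 0 := by
    intro k hk
    have hk0 : k = 0 := by
      cases k with
      | zero => rfl
      | succ n => exact absurd ⟨n, rfl⟩ hk
    subst hk0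
    rw [hy0, norm_zero, Real.zero_rpow (ne_of_gt hr)]
  have hmem : Memℓp y 2 := by
    apply memℓp_gen
    exact (Function.Injective.summable_iff Nat.succ_injective hrange).mp hsum1
  set Y : lp (fun _ : ℕ => ℂ) 2 := ⟨y, hmem⟩ with hYdef
  have hYsum : HasSum (fun k => lp.single (E := fun _ : ℕ => ℂ) 2 k (y k)) Y := lp.hasSum_single h2top Y
  have hrange2 : ∀ k : ℕ, k ∉ Set.range Nat.succ → lp.single (E := fun _ : ℕ => ℂ) 2 k (y k) = 0 := by
    intro k hk
    have hk0 : k = 0 := by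
      cases k with
      | zero => rfl
      | succ n => exact absurd ⟨n, rfl⟩ hk
    subst hk0
    rw [hy0, lp_single_zero]
  have hY' : HasSum (fun n => lp.single 2 (n+1) (y (n+1))) Y :=
    (Function.Injective.hasSum_iff Nat.succ_injective hrange2).mpr hYsum
  have hx := lp.hasSum_single h2top x
  have hTx := hx.mapL T
  have hkey : ∀ n : ℕ, T (lp.single 2 n (x n)) = lp.single 2 (n+1) (y (n+1)) := by
    intro n
    have h1 : lp.single (E := fun _ : ℕ => ℂ) 2 n (x n) = x n • lp.single (E := fun _ : ℕ => ℂ) 2 n (1:ℂ) := by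
      rw [← lp.single_smul]
      norm_num
    rw [h1, map_smul, hT n, smul_smul, hys]
    have h2 : ((c n:ℝ):ℂ) * x n = (x n * ((c n:ℝ):ℂ)) • (1:ℂ) := by
      simp [smul_eq_mul, mul_comm]
    rw [h2, lp.single_smul]
  have hTx' : HasSum (fun n => lp.single 2 (n+1) (y (n+1))) (T x) := by
    simpa only [hkey] using hTx
  have hTY : T x = Y := hTx'.unique hY'
  rw [hTY]
  refine lp.norm_le_of_tsum_le hr (mul_nonneg hK (norm_nonneg x)) ?_
  have e1 : ∑' k, ‖Y k‖ ^ t = ∑' n, ‖y (n+1)‖ ^ t := by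
    refine (Function.Injective.tsum_eq Nat.succ_injective ?_).symm
    intro k hk
    by_contra hmem2
    exact hk (hrange k hmem2)
  calc ∑' k, ‖Y k‖ ^ t = ∑' n, ‖y (n+1)‖ ^ t := e1
    _ ≤ ∑' n, K ^ t * ‖x n‖ ^ t := Summable.tsum_le_tsum hbd hsum1 (hx2.mul_left _)
    _ = K ^ t * ∑' n, ‖x n‖ ^ t := tsum_mul_left
    _ = K ^ t * ‖x‖ ^ t := by rw [← lp.norm_rpow_eq_tsum hr x]
    _ = (K * ‖x‖) ^ t := (Real.mul_rpow hK (norm_nonneg _)).symm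

lemma conv_aux (α : ℕ → ℝ) (l : ℝ) (hl : l ∈ Set.Ico (0:ℝ) 1)
    (W : ℕ → (lp (fun _ : ℕ => ℂ) 2 →L[ℂ] lp (fun _ : ℕ => ℂ) 2))
    (hW : ∀ m n : ℕ, W m (lp.single 2 n (1 : ℂ)) =
      ((∑ i ∈ Finset.range (m + 1),
          (m.choose i : ℝ) * l ^ (m - i) * (1 - l) ^ i * α (n + i) : ℝ) : ℂ) •
        lp.single 2 (n + 1) (1 : ℂ))
    (S : lp (fun _ : ℕ => ℂ) 2 →L[ℂ] lp (fun _ : ℕ => ℂ) 2)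
    (hS : ∀ n : ℕ, S (lp.single 2 n (1 : ℂ)) = lp.single 2 (n + 1) (1 : ℂ))
    (L : ℝ) (γ : ℕ → ℝ)
    (hγ : ∀ n i : ℕ, |α (n + i) - L| ≤ γ i)
    (hmono : Antitone γ) (hnn : ∀ i, 0 ≤ γ i)
    (hsmall : ∀ ε > (0:ℝ), ∃ N, γ N < ε) :
    Tendsto W atTop (nhds ((L : ℂ) • S)) := by
  rw [tendsto_iff_norm_sub_tendsto_zero]
  have hKnn : ∀ m, 0 ≤ ∑ i ∈ Finset.range (m+1), wgt l m i * γ i :=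
    fun m => Finset.sum_nonneg fun i _ => mul_nonneg (wgt_nonneg hl m i) (hnn i)
  apply squeeze_zero (fun m => norm_nonneg _) _ (key_tendsto hl γ hnn hmono hsmall)
  intro m
  set K := ∑ i ∈ Finset.range (m+1), wgt l m i * γ i with hK
  refine op_norm_le _ (fun n => (∑ i ∈ Finset.range (m+1), wgt l m i * α (n+i)) - L) K
    (hKnn m) ?_ ?_
  · intro n
    have h1 : (∑ i ∈ Finset.range (m+1), wgt l m i * α (n+i)) - L
        = ∑ i ∈ Finset.range (m+1), wgt l m i * (α (n+i) - L) := by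
      rw [eq_comm]
      calc ∑ i ∈ Finset.range (m+1), wgt l m i * (α (n+i) - L)
          = ∑ i ∈ Finset.range (m+1), (wgt l m i * α (n+i) - wgt l m i * L) := by
            apply Finset.sum_congr rfl; intro i _; ring
        _ = (∑ i ∈ Finset.range (m+1), wgt l m i * α (n+i))
            - (∑ i ∈ Finset.range (m+1), wgt l m i) * L := by
            rw [Finset.sum_sub_distrib, Finset.sum_mul]
        _ = _ := by rw [wgt_sum l m, one_mul]
    show |(∑ i ∈ Finset.range (m+1), wgt l m i * α (n+i)) - L| ≤ K
    rw [h1]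
    calc |∑ i ∈ Finset.range (m+1), wgt l m i * (α (n+i) - L)|
        ≤ ∑ i ∈ Finset.range (m+1), |wgt l m i * (α (n+i) - L)| :=
          Finset.abs_sum_le_sum_abs _ _
      _ ≤ K := by
          rw [hK]
          apply Finset.sum_le_sum
          intro i _
          rw [abs_mul, abs_of_nonneg (wgt_nonneg hl m i)]
          exact mul_le_mul_of_nonneg_left (hγ n i) (wgt_nonneg hl m i)
  · intro n
    have h0 : (W m - (L:ℂ) • S) (lp.single 2 n (1:ℂ))
        = W m (lp.single 2 n 1) - (L:ℂ) • S (lp.single 2 n 1) := rfl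
    rw [h0, hW m n, hS n, ← sub_smul]
    have hc : ((∑ i ∈ Finset.range (m + 1),
        (m.choose i : ℝ) * l ^ (m - i) * (1 - l) ^ i * α (n + i) : ℝ) : ℂ) - (L:ℂ)
        = (((∑ i ∈ Finset.range (m+1), wgt l m i * α (n+i)) - L : ℝ) : ℂ) := by
      simp only [wgt]
      push_cast
      ring
    rw [hc]

/-- The iterated λ-mean transforms of a unilateral weighted shift with monotone weights
converge in operator norm to a multiple of the unweighted unilateral shift. -/
theorem stmt3 (α : ℕ → ℝ) (hpos : ∀ n, 0 < α n) (hbdd : BddAbove (Set.range α))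
    (l : ℝ) (hl : l ∈ Set.Ico (0 : ℝ) 1)
    (W : ℕ → (lp (fun _ : ℕ => ℂ) 2 →L[ℂ] lp (fun _ : ℕ => ℂ) 2))
    (hW : ∀ m n : ℕ, W m (lp.single 2 n (1 : ℂ)) =
      ((∑ i ∈ Finset.range (m + 1),
          (m.choose i : ℝ) * l ^ (m - i) * (1 - l) ^ i * α (n + i) : ℝ) : ℂ) •
        lp.single 2 (n + 1) (1 : ℂ))
    (S : lp (fun _ : ℕ => ℂ) 2 →L[ℂ] lp (fun _ : ℕ => ℂ) 2)
    (hS : ∀ n : ℕ, S (lp.single 2 n (1 : ℂ)) = lp.single 2 (n + 1) (1 : ℂ)) :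
    (Antitone α → Tendsto W atTop (nhds (((⨅ n, α n : ℝ) : ℂ) • S))) ∧
    (Monotone α → Tendsto W atTop (nhds (((⨆ n, α n : ℝ) : ℂ) • S))) := by
  constructor
  · intro hanti
    set L := ⨅ n, α n with hL
    have hbel : BddBelow (Set.range α) := ⟨0, by rintro x ⟨n, rfl⟩; exact (hpos n).le⟩
    have hLle : ∀ k, L ≤ α k := fun k => ciInf_le hbel k
    apply conv_aux α l hl W hW S hS L (fun i => α i - L)
    · intro n i
      rw [abs_of_nonneg (by linarith [hLle (n+i)])]
      have := hanti (Nat.le_add_left i n)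
      linarith
    · intro a b hab
      simp only
      have := hanti hab
      linarith
    · intro i; linarith [hLle i]
    · intro ε hε
      have hlt : L < L + ε := by linarith
      obtain ⟨N, hN⟩ := exists_lt_of_ciInf_lt (show ⨅ n, α n < L + ε from hL ▸ hlt)
      exact ⟨N, by linarith⟩
  · intro hmon
    set L := ⨆ n, α n with hL
    have hLge : ∀ k, α k ≤ L := fun k => le_ciSup hbdd k
    apply conv_aux α l hl W hW S hS L (fun i => L - α i)
    · intro n i
      rw [abs_of_nonpos (by linarith [hLge (n+i)])]
      have := hmon (Nat.le_add_left i n)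
      linarith
    · intro a b hab
      simp only
      have := hmon hab
      linarith
    · intro i; linarith [hLge i]
    · intro ε hε
      obtain ⟨N, hN⟩ := exists_lt_of_lt_ciSup (show L - ε < ⨆ n, α n from hL ▸ (by linarith))
      exact ⟨N, by linarith⟩
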